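/- Let V ∈ C²(T), 0 < α ≤ 2, c_j > 0, and fix (a_1,...,a_n,b_1,...,b_n) ∈ R^{2n}. Let l = −min_{x∈T}(∑_{k=1}^n (a_k cos(2πkx) + b_k sin(2πkx)) − V(x)). Define g(a_0) = ∫_T c_j (a_0 + ∑_k (a_k cos(2πky) + b_k sin(2πky)) − V(y))^{−1/α} dy for a_0 > l. Then g is strictly decreasing on (l, ∞), g(a_0) → ∞ as a_0 → l⁺, and g(a_0) → 0 as a_0 → ∞. Consequently, there exists a unique a_0 = ω(a', b) ∈ (l, ∞) with g(a_0) = 1. -/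

import Mathlib

open Real Filter

/-- Quadratic upper bound near a critical point, from a bound on the second
derivative, via two applications of the mean value theorem. -/
lemma stmt11_quad {f : ℝ → ℝ} (hf : ContDiff ℝ 2 f) {x₁ M y : ℝ}
    (hd : deriv f x₁ = 0)
    (hM : ∀ z ∈ Set.Icc x₁ (x₁ + 1), |deriv (deriv f) z| ≤ M)
    (hy : y ∈ Set.Icc x₁ (x₁ + 1)) :
    f y - f x₁ ≤ M * (y - x₁) ^ 2 := by
  have hMnn : 0 ≤ M := le_trans (abs_nonneg _) (hM x₁ ⟨le_refl _, by linarith⟩)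
  have hf2 : ContDiff ℝ ((1 : WithTop ℕ∞) + 1) f := by
    rwa [show ((1 : WithTop ℕ∞) + 1) = 2 by norm_num]
  have hd1 : Differentiable ℝ f := hf.differentiable (by norm_num)
  have hfd1 : ContDiff ℝ 1 (deriv f) := (contDiff_succ_iff_deriv.mp hf2).2.2
  have hd2 : Differentiable ℝ (deriv f) := hfd1.differentiable (by norm_num)
  rcases eq_or_lt_of_le hy.1 with h | h
  · simp [← h]
  · obtain ⟨c, hc, hceq⟩ := exists_hasDerivAt_eq_slope f (deriv f) h
      (hd1.continuous.continuousOn) (fun z _ => (hd1 z).hasDerivAt)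
    obtain ⟨d, hdm, hdeq⟩ := exists_hasDerivAt_eq_slope (deriv f) (deriv (deriv f)) hc.1
      (hd2.continuous.continuousOn) (fun z _ => (hd2 z).hasDerivAt)
    have hdIcc : d ∈ Set.Icc x₁ (x₁ + 1) :=
      ⟨hdm.1.le, by linarith [hdm.2, hc.2, hy.2]⟩
    have hA := hM d hdIcc
    rw [hd, sub_zero] at hdeq
    have hyx : y - x₁ ≠ 0 := by linarith
    have hcx : c - x₁ ≠ 0 := by have := hc.1; intro h'; rw [sub_eq_zero] at h'; linarith
    have hkey : f y - f x₁ = deriv (deriv f) d * (c - x₁) * (y - x₁) := by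
      field_simp at hceq hdeq
      rw [← hceq, ← hdeq]
    rw [hkey]
    have hA2 : deriv (deriv f) d ≤ M := (abs_le.mp hA).2
    have h0c : (0:ℝ) ≤ c - x₁ := by linarith [hc.1]
    have h0y : (0:ℝ) ≤ y - x₁ := by linarith
    have hcy : c - x₁ ≤ y - x₁ := by linarith [hc.2]
    calc deriv (deriv f) d * (c - x₁) * (y - x₁)
        ≤ M * (c - x₁) * (y - x₁) :=
          mul_le_mul_of_nonneg_right (mul_le_mul_of_nonneg_right hA2 h0c) h0y
      _ ≤ M * (y - x₁) * (y - x₁) :=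
          mul_le_mul_of_nonneg_right (mul_le_mul_of_nonneg_left hcy hMnn) h0y
      _ = M * (y - x₁) ^ 2 := by ring

set_option maxHeartbeats 1000000 in
lemma stmt11_main (f : ℝ → ℝ) (hf : ContDiff ℝ 2 f) (hper : Function.Periodic f 1)
    (α cj : ℝ) (hα0 : 0 < α) (hα2 : α ≤ 2) (hcj : 0 < cj) (l : ℝ)
    (hl : IsGLB (Set.range f) (-l))
    (g : ℝ → ℝ)
    (hg : ∀ a₀ : ℝ, g a₀ = ∫ y in (0:ℝ)..1, cj * (a₀ + f y) ^ (-(1 / α))) :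
    StrictAntiOn g (Set.Ioi l) ∧
    Tendsto g (nhdsWithin l (Set.Ioi l)) atTop ∧
    Tendsto g atTop (nhds 0) ∧
    ∃! a₀ : ℝ, a₀ ∈ Set.Ioi l ∧ g a₀ = 1 := by
  have h1α : 0 < 1 / α := by positivity
  have hexp : -(1 / α) < 0 := by linarith
  have hflb : ∀ y, -l ≤ f y := fun y => hl.1 ⟨y, rfl⟩
  have hfc : Continuous f := hf.continuous
  have hbpos : ∀ a₀ > l, ∀ y : ℝ, 0 < a₀ + f y := by
    intro a₀ ha y; have := hflb y; linarith
  have hint_cont : ∀ a₀ > l, Continuous fun y => cj * (a₀ + f y) ^ (-(1 / α)) := by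
    intro a₀ ha
    exact continuous_const.mul ((continuous_const.add hfc).rpow_const
      (fun y => Or.inl (ne_of_gt (hbpos a₀ ha y))))
  -- Part 1 : strict antitonicity
  have part1 : StrictAntiOn g (Set.Ioi l) := by
    intro s hs t ht hst
    rw [hg s, hg t]
    apply intervalIntegral.integral_lt_integral_of_continuousOn_of_le_of_exists_lt zero_lt_one
      ((hint_cont t ht).continuousOn) ((hint_cont s hs).continuousOn)
    · intro y _
      exact mul_le_mul_of_nonneg_left
        (Real.rpow_le_rpow_of_nonpos (hbpos s hs y) (by linarith) hexp.le) hcj.le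
    · exact ⟨0, Set.mem_Icc.2 ⟨le_refl _, zero_le_one⟩,
        mul_lt_mul_of_pos_left
          (Real.rpow_lt_rpow_of_neg (hbpos s hs 0) (by linarith) hexp) hcj⟩
  -- Part 3 : limit 0 at infinity
  have part3 : Tendsto g atTop (nhds 0) := by
    have hub : ∀ᶠ a₀ in atTop, g a₀ ≤ cj * (a₀ - l) ^ (-(1 / α)) := by
      filter_upwards [eventually_gt_atTop l] with a₀ ha
      rw [hg]
      calc (∫ y in (0:ℝ)..1, cj * (a₀ + f y) ^ (-(1 / α)))
          ≤ ∫ _ in (0:ℝ)..1, cj * (a₀ - l) ^ (-(1 / α)) := by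
            apply intervalIntegral.integral_mono_on zero_le_one
              ((hint_cont a₀ ha).intervalIntegrable _ _)
              (intervalIntegrable_const)
            intro y _
            apply mul_le_mul_of_nonneg_left _ hcj.le
            exact Real.rpow_le_rpow_of_nonpos (by linarith) (by linarith [hflb y]) hexp.le
        _ = cj * (a₀ - l) ^ (-(1 / α)) := by simp
    have hlb : ∀ᶠ a₀ in atTop, 0 ≤ g a₀ := by
      filter_upwards [eventually_gt_atTop l] with a₀ ha
      rw [hg]
      apply intervalIntegral.integral_nonneg zero_le_one
      intro y _
      exact mul_nonneg hcj.le (Real.rpow_nonneg (hbpos a₀ ha y).le _)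
    have hten : Tendsto (fun a₀ : ℝ => cj * (a₀ - l) ^ (-(1 / α))) atTop (nhds 0) := by
      have h1 : Tendsto (fun a₀ : ℝ => a₀ - l) atTop atTop :=
        tendsto_atTop_add_const_right _ _ tendsto_id
      have h2 := (tendsto_rpow_neg_atTop h1α).comp h1
      simpa using h2.const_mul cj
    exact tendsto_of_tendsto_of_tendsto_of_le_of_le' tendsto_const_nhds hten hlb hub
  -- Continuity on `Ioi l`
  have hcont : ContinuousOn g (Set.Ioi l) := by
    intro a₀ ha₀
    apply ContinuousAt.continuousWithinAt
    have ha₀' : l < a₀ := ha₀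
    set c : ℝ := (l + a₀) / 2 with hc
    have hlc : l < c := by rw [hc]; linarith
    have hca : c < a₀ := by rw [hc]; linarith
    have hGc : Continuous fun s => ∫ y in (0:ℝ)..1, cj * (max s c + f y) ^ (-(1 / α)) := by
      apply intervalIntegral.continuous_parametric_intervalIntegral_of_continuous'
      apply Continuous.mul continuous_const
      apply Continuous.rpow_const
      · exact (continuous_fst.max continuous_const).add (hfc.comp continuous_snd)
      · rintro ⟨s, y⟩
        left
        have h1 := le_max_right s c
        have h2 := hflb y
        intro h'
        simp only at h'
        nlinarith
    have heq : (fun s => ∫ y in (0:ℝ)..1, cj * (max s c + f y) ^ (-(1 / α))) =ᶠ[nhds a₀] g := by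
      filter_upwards [Ioi_mem_nhds hca] with s hs
      rw [hg s]
      simp only [max_eq_left (le_of_lt (show c < s from hs))]
    exact hGc.continuousAt.congr heq
  -- Part 2 : divergence at `l⁺`
  have part2 : Tendsto g (nhdsWithin l (Set.Ioi l)) atTop := by
    -- a global minimizer
    obtain ⟨x₁, hx₁⟩ : ∃ x₁, f x₁ = -l := by
      obtain ⟨z, hz, hzmin⟩ := isCompact_Icc.exists_isMinOn (Set.nonempty_Icc.2 zero_le_one)
        (hfc.continuousOn (s := Set.Icc (0:ℝ) 1))
      refine ⟨z, le_antisymm ?_ (hflb z)⟩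
      refine hl.2 fun w hw => ?_
      obtain ⟨x, rfl⟩ := hw
      have h1 : f (Int.fract x) = f x := by
        have h2 := hper.sub_int_mul_eq (x := x) (n := ⌊x⌋)
        rw [mul_one] at h2
        rw [Int.fract]; exact h2
      rw [← h1]
      exact hzmin (Set.mem_Icc.2 ⟨Int.fract_nonneg x, (Int.fract_lt_one x).le⟩)
    have hd1 : Differentiable ℝ f := hf.differentiable (by norm_num)
    have hmin : IsLocalMin f x₁ :=
      Filter.Eventually.of_forall fun y => by rw [hx₁]; exact hflb y
    have hdx₁ : deriv f x₁ = 0 := hmin.deriv_eq_zero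
    have hf2 : ContDiff ℝ ((1 : WithTop ℕ∞) + 1) f := by
      rwa [show ((1 : WithTop ℕ∞) + 1) = 2 by norm_num]
    have hfd1 : ContDiff ℝ 1 (deriv f) := (contDiff_succ_iff_deriv.mp hf2).2.2
    have hcont2 : Continuous (deriv (deriv f)) := hfd1.continuous_deriv le_rfl
    obtain ⟨M₀, hM₀⟩ := (isCompact_Icc (a := x₁) (b := x₁ + 1)).exists_bound_of_continuousOn
      hcont2.continuousOn
    set M : ℝ := max M₀ 1 with hM
    have hMpos : 0 < M := lt_of_lt_of_le zero_lt_one (le_max_right _ _)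
    have hMb : ∀ z ∈ Set.Icc x₁ (x₁ + 1), |deriv (deriv f) z| ≤ M := fun z hz =>
      le_trans (hM₀ z hz) (le_max_left _ _)
    have hquad : ∀ y ∈ Set.Icc x₁ (x₁ + 1), f y + l ≤ M * (y - x₁) ^ 2 := by
      intro y hy
      have h := stmt11_quad hf hdx₁ hMb hy
      rw [hx₁] at h; linarith
    set δ : ℝ := min (1 / 2) (Real.sqrt (1 / (2 * M))) with hδ
    have hδpos : 0 < δ := lt_min (by norm_num) (Real.sqrt_pos.2 (by positivity))
    have hδhalf : δ ≤ 1 / 2 := min_le_left _ _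
    have hδM : M * δ ^ 2 ≤ 1 / 2 := by
      have h1 : δ ≤ Real.sqrt (1 / (2 * M)) := min_le_right _ _
      have h2 : Real.sqrt (1 / (2 * M)) ^ 2 = 1 / (2 * M) :=
        Real.sq_sqrt (by positivity)
      have h3 : δ ^ 2 ≤ 1 / (2 * M) := by
        rw [← h2]; exact pow_le_pow_left₀ hδpos.le h1 2
      calc M * δ ^ 2 ≤ M * (1 / (2 * M)) := by
            exact mul_le_mul_of_nonneg_left h3 hMpos.le
        _ = 1 / 2 := by field_simp
    set sM : ℝ := Real.sqrt M with hsM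
    have hsMpos : 0 < sM := Real.sqrt_pos.2 hMpos
    have hsM2 : sM ^ 2 = M := Real.sq_sqrt hMpos.le
    set Φ : ℝ → ℝ := fun a₀ =>
      cj / sM * Real.log ((sM * δ + Real.sqrt (a₀ - l)) / Real.sqrt (a₀ - l)) with hΦ
    -- step A : lower bound
    have stepA : ∀ a₀ ∈ Set.Ioo l (l + 1 / 2), Φ a₀ ≤ g a₀ := by
      intro a₀ ha
      have hal : l < a₀ := ha.1
      set σ : ℝ := a₀ - l with hσ
      have hσpos : 0 < σ := by rw [hσ]; linarith [ha.1]
      have hσhalf : σ ≤ 1 / 2 := by rw [hσ]; linarith [ha.2]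
      set sσ : ℝ := Real.sqrt σ with hsσ
      have hsσpos : 0 < sσ := Real.sqrt_pos.2 hσpos
      have hsσ2 : sσ ^ 2 = σ := Real.sq_sqrt hσpos.le
      set I : ℝ → ℝ := fun y => cj * (a₀ + f y) ^ (-(1 / α)) with hI
      have hIc : Continuous I := hint_cont a₀ hal
      have hInn : ∀ y, 0 ≤ I y := fun y =>
        mul_nonneg hcj.le (Real.rpow_nonneg (hbpos a₀ hal y).le _)
      have hperI : Function.Periodic I 1 := fun y => by simp only [hI, hper y]
      -- shift the integral
      have hshift : g a₀ = ∫ y in x₁..x₁ + 1, I y := by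
        rw [hg]
        have h := hperI.intervalIntegral_add_eq 0 x₁
        rw [zero_add] at h
        exact h
      set J : ℝ → ℝ := fun y => cj * (sM * (y - x₁) + sσ)⁻¹ with hJ
      have hJint : IntervalIntegrable J MeasureTheory.volume x₁ (x₁ + δ) := by
        apply ContinuousOn.intervalIntegrable
        apply ContinuousOn.mul continuousOn_const
        apply ContinuousOn.inv₀ (by fun_prop)
        intro y hy
        rw [Set.uIcc_of_le (by linarith)] at hy
        have h1 : 0 ≤ y - x₁ := by linarith [hy.1]
        nlinarith [mul_nonneg hsMpos.le h1]
      have hIJ : ∀ y ∈ Set.Icc x₁ (x₁ + δ), J y ≤ I y := by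
        intro y hy
        have ht0 : 0 ≤ y - x₁ := by linarith [hy.1]
        have htδ : y - x₁ ≤ δ := by linarith [hy.2]
        have hyIcc : y ∈ Set.Icc x₁ (x₁ + 1) := ⟨hy.1, by linarith [hδhalf, hy.2]⟩
        have hq := hquad y hyIcc
        have hB0 : 0 < a₀ + f y := hbpos a₀ hal y
        have hMd : M * (y - x₁) ^ 2 ≤ M * δ ^ 2 :=
          mul_le_mul_of_nonneg_left (pow_le_pow_left₀ ht0 htδ 2) hMpos.le
        have hB1 : a₀ + f y ≤ 1 := by
          have hσe : σ = a₀ - l := hσ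
          linarith [hδM, hσhalf]
        set cb : ℝ := sM * (y - x₁) + sσ with hcb
        have hcb0 : 0 < cb := by
          have := mul_nonneg hsMpos.le ht0
          rw [hcb]; linarith
        have hstep1 : a₀ + f y ≤ cb ^ 2 := by
          have hσe : σ = a₀ - l := hσ
          nlinarith [mul_nonneg (mul_nonneg hsMpos.le ht0) hsσpos.le]
        have hhalf : -(1 / α) ≤ -((1:ℝ) / 2) := by
          have h12 : (1:ℝ) / 2 ≤ 1 / α := one_div_le_one_div_of_le hα0 hα2
          linarith
        have hr1 : (a₀ + f y) ^ (-((1:ℝ) / 2)) ≤ (a₀ + f y) ^ (-(1 / α)) :=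
          Real.rpow_le_rpow_of_exponent_ge hB0 hB1 hhalf
        have hr2 : (cb ^ 2 : ℝ) ^ (-((1:ℝ) / 2)) ≤ (a₀ + f y) ^ (-((1:ℝ) / 2)) :=
          Real.rpow_le_rpow_of_nonpos hB0 hstep1 (by norm_num)
        have hr3 : (cb ^ 2 : ℝ) ^ (-((1:ℝ) / 2)) = cb⁻¹ := by
          rw [← Real.rpow_natCast cb 2, ← Real.rpow_mul hcb0.le]
          norm_num [Real.rpow_neg_one]
        have : cb⁻¹ ≤ (a₀ + f y) ^ (-(1 / α)) := by
          rw [← hr3]; exact le_trans hr2 hr1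
        exact mul_le_mul_of_nonneg_left this hcj.le
      have hsplit : (∫ y in x₁..x₁ + δ, I y) ≤ ∫ y in x₁..x₁ + 1, I y := by
        rw [← intervalIntegral.integral_add_adjacent_intervals
          (hIc.intervalIntegrable x₁ (x₁ + δ)) (hIc.intervalIntegrable (x₁ + δ) (x₁ + 1))]
        have h0 : 0 ≤ ∫ y in x₁ + δ..x₁ + 1, I y :=
          intervalIntegral.integral_nonneg (by linarith) fun y _ => hInn y
        linarith
      have hmono : (∫ y in x₁..x₁ + δ, J y) ≤ ∫ y in x₁..x₁ + δ, I y :=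
        intervalIntegral.integral_mono_on (by linarith) hJint
          (hIc.intervalIntegrable _ _) hIJ
      have hcomp : (∫ y in x₁..x₁ + δ, J y) = Φ a₀ := by
        have e1 : (∫ y in x₁..x₁ + δ, J y) = ∫ t in (0:ℝ)..δ, cj * (sM * t + sσ)⁻¹ := by
          have h := intervalIntegral.integral_comp_sub_right
            (a := x₁) (b := x₁ + δ) (fun t => cj * (sM * t + sσ)⁻¹) x₁
          rw [sub_self, add_sub_cancel_left] at h
          simp only [hJ]
          exact h
        have e2 : (∫ t in (0:ℝ)..δ, cj * (sM * t + sσ)⁻¹)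
            = cj * ∫ t in (0:ℝ)..δ, (sM * t + sσ)⁻¹ :=
          intervalIntegral.integral_const_mul _ _
        have e3 : sM * ∫ t in (0:ℝ)..δ, (sM * t + sσ)⁻¹
            = ∫ u in (sM * 0 + sσ)..(sM * δ + sσ), u⁻¹ :=
          intervalIntegral.mul_integral_comp_mul_add (f := fun u => u⁻¹) sM sσ
        have e4 : (∫ u in (sM * 0 + sσ)..(sM * δ + sσ), u⁻¹)
            = Real.log ((sM * δ + sσ) / sσ) := by
          have hmem : (0:ℝ) ∉ Set.uIcc sσ (sM * δ + sσ) := by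
            rw [Set.uIcc_of_le (by nlinarith [mul_pos hsMpos hδpos])]
            intro hmem
            linarith [hmem.1]
          rw [show sM * 0 + sσ = sσ by ring, integral_inv hmem]
        have e5 : (∫ t in (0:ℝ)..δ, (sM * t + sσ)⁻¹)
            = Real.log ((sM * δ + sσ) / sσ) / sM := by
          rw [← e4, ← e3]; field_simp
        rw [e1, e2, e5]
        simp only [hΦ]
        rw [← hσ, ← hsσ]
        ring
      rw [hshift, ← hcomp]
      exact le_trans hmono hsplit
    -- step B : the lower bound diverges
    have stepB : Tendsto Φ (nhdsWithin l (Set.Ioi l)) atTop := by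
      have h1 : Tendsto (fun a₀ : ℝ => Real.sqrt (a₀ - l)) (nhdsWithin l (Set.Ioi l))
          (nhdsWithin 0 (Set.Ioi 0)) := by
        rw [tendsto_nhdsWithin_iff]
        constructor
        · have h2 : Tendsto (fun a₀ : ℝ => Real.sqrt (a₀ - l)) (nhds l)
              (nhds (Real.sqrt (l - l))) :=
            (Real.continuous_sqrt.comp (by fun_prop)).tendsto l
          simpa using h2.mono_left nhdsWithin_le_nhds
        · filter_upwards [self_mem_nhdsWithin] with x hx
          exact Real.sqrt_pos.2 (by simp only [Set.mem_Ioi] at hx ⊢; linarith)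
      have h2 : Tendsto (fun s : ℝ => (sM * δ + s) / s) (nhdsWithin 0 (Set.Ioi 0)) atTop := by
        have h3 : Tendsto (fun s : ℝ => sM * δ * s⁻¹ + 1) (nhdsWithin 0 (Set.Ioi 0)) atTop :=
          tendsto_atTop_add_const_right _ _
            (tendsto_inv_nhdsGT_zero.const_mul_atTop (by positivity))
        apply h3.congr'
        filter_upwards [self_mem_nhdsWithin] with s hs
        have hs' : s ≠ 0 := ne_of_gt hs
        field_simp
      have h4 := (Real.tendsto_log_atTop.comp (h2.comp h1)).const_mul_atTop
        (show (0:ℝ) < cj / sM by positivity)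
      exact h4
    refine tendsto_atTop_mono' _ ?_ stepB
    filter_upwards [Ioo_mem_nhdsGT_of_mem
      (show l ∈ Set.Ico l (l + 1 / 2) from ⟨le_refl l, by norm_num⟩)] with a₀ ha
    exact stepA a₀ ha
  -- Part 4 : unique solution of g = 1
  have part4 : ∃! a₀ : ℝ, a₀ ∈ Set.Ioi l ∧ g a₀ = 1 := by
    obtain ⟨s, hgs, hs⟩ := ((part2.eventually_gt_atTop 1).and self_mem_nhdsWithin).exists
    obtain ⟨t, hgt, ht⟩ := ((part3.eventually_lt_const zero_lt_one).and
      (eventually_gt_atTop l)).exists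
    have hs' : l < s := hs
    have hst : s < t := by
      rcases lt_trichotomy s t with h | h | h
      · exact h
      · exfalso; rw [h] at hgs; linarith
      · exfalso
        have := part1 ht hs h
        linarith
    have hone : (1:ℝ) ∈ Set.Icc (g t) (g s) := ⟨hgt.le, hgs.le⟩
    have hsub : Set.Icc s t ⊆ Set.Ioi l := fun z hz => lt_of_lt_of_le hs' hz.1
    obtain ⟨a₀, ha₀, hga₀⟩ := intermediate_value_Icc' hst.le (hcont.mono hsub) hone
    refine ⟨a₀, ⟨hsub ha₀, hga₀⟩, ?_⟩
    rintro y ⟨hy, hgy⟩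
    exact part1.injOn hy (hsub ha₀) (by rw [hgy, hga₀])
  exact ⟨part1, part2, part3, part4⟩

theorem stmt_11 (n : ℕ) (V : ℝ → ℝ) (hV : ContDiff ℝ 2 V) (hVper : Function.Periodic V 1)
    (α cj : ℝ) (hα0 : 0 < α) (hα2 : α ≤ 2) (hcj : 0 < cj)
    (a b : ℕ → ℝ) (l : ℝ)
    (hl : IsGLB (Set.range fun x : ℝ =>
      (∑ k ∈ Finset.Icc 1 n, (a k * Real.cos (2 * π * k * x) + b k * Real.sin (2 * π * k * x)))
        - V x) (-l))
    (g : ℝ → ℝ)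
    (hg : ∀ a₀ : ℝ, g a₀ = ∫ y in (0:ℝ)..1, cj *
      (a₀ + (∑ k ∈ Finset.Icc 1 n,
        (a k * Real.cos (2 * π * k * y) + b k * Real.sin (2 * π * k * y))) - V y) ^ (-(1 / α))) :
    StrictAntiOn g (Set.Ioi l) ∧
    Tendsto g (nhdsWithin l (Set.Ioi l)) atTop ∧
    Tendsto g atTop (nhds 0) ∧
    ∃! a₀ : ℝ, a₀ ∈ Set.Ioi l ∧ g a₀ = 1 := by
  set f : ℝ → ℝ := fun x =>
    (∑ k ∈ Finset.Icc 1 n, (a k * Real.cos (2 * π * k * x) + b k * Real.sin (2 * π * k * x)))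
      - V x with hfdef
  have hfC : ContDiff ℝ 2 f := by
    apply ContDiff.sub _ hV
    apply ContDiff.sum
    intro k _
    apply ContDiff.add
    · exact contDiff_const.mul (Real.contDiff_cos.comp (contDiff_const.mul contDiff_id))
    · exact contDiff_const.mul (Real.contDiff_sin.comp (contDiff_const.mul contDiff_id))
  have hper : Function.Periodic f 1 := by
    intro x
    simp only [hfdef]
    rw [hVper x]
    congr 1
    apply Finset.sum_congr rfl
    intro k _
    have h1 : 2 * π * k * (x + 1) = 2 * π * k * x + (k : ℤ) * (2 * π) := by push_cast; ring
    rw [h1, Real.cos_add_int_mul_two_pi, Real.sin_add_int_mul_two_pi]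
  have hg' : ∀ a₀ : ℝ, g a₀ = ∫ y in (0:ℝ)..1, cj * (a₀ + f y) ^ (-(1 / α)) := by
    intro a₀
    rw [hg]
    simp only [hfdef, add_sub_assoc]
  exact stmt11_main f hfC hper α cj hα0 hα2 hcj l hl g hg'
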